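/- arXiv:2207.07807 — 3 statements merged into one kernel-verified Lean document; each statement's English description precedes it below -/
import Mathlib

section
/- Let $A = \bigoplus_{i \ge 0} A_i$ be a noetherian graded ring generated as an $A_0$-algebra by elements of degree 1 (homogeneous), and let $M = \bigoplus_{i \in \mathbb{Z}} M_i$ be a finitely generated graded $A$-module. Then there exists an integer $k$ such that $\operatorname{Ann}_{A_0}(M_t) = \operatorname{Ann}_{A_0}(M_k)$ for all integers $t \ge k$. -/
open RingTheory.Sequence

/-- The dimension of a module `M` over `R`: the Krull dimension of `R ⧸ Ann_R(M)`. -/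
noncomputable def moduleDim (R M : Type*) [CommRing R] [AddCommGroup M] [Module R M] :
    WithBot ℕ∞ :=
  ringKrullDim (R ⧸ Module.annihilator R M)

open Classical in
/-- The depth of a module `M` over a local ring `R`: `⊤` if `M = 0`, otherwise the
supremum of lengths of `M`-regular sequences contained in the maximal ideal. -/
noncomputable def moduleDepth (R M : Type*) [CommRing R] [IsLocalRing R]
    [AddCommGroup M] [Module R M] : ℕ∞ :=
  if Subsingleton M then ⊤
  else sSup {n : ℕ∞ | ∃ rs : List R, (rs.length : ℕ∞) = n ∧
    (∀ x ∈ rs, x ∈ IsLocalRing.maximalIdeal R) ∧ RingTheory.Sequence.IsRegular M rs}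

open Classical in
/-- The codepth of a module over a local ring: `⊥` if `M = 0`, else `dim M - depth M`. -/
noncomputable def moduleCodepth (R M : Type*) [CommRing R] [IsLocalRing R]
    [AddCommGroup M] [Module R M] : WithBot ℕ∞ :=
  if Subsingleton M then ⊥
  else ((WithBot.unbotD 0 (moduleDim R M) - moduleDepth R M : ℕ∞) : WithBot ℕ∞)

/-- A localized module `M_𝔭` is Cohen–Macaulay over `R_𝔭`. -/
noncomputable def isCMAt (R M : Type*) [CommRing R] [AddCommGroup M] [Module R M]
    (𝔭 : Ideal R) [𝔭.IsPrime] : Prop :=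
  moduleDim (Localization.AtPrime 𝔭) (LocalizedModule 𝔭.primeCompl M)
    ≤ (moduleDepth (Localization.AtPrime 𝔭) (LocalizedModule 𝔭.primeCompl M) : WithBot ℕ∞)

/-- The Cohen–Macaulay locus of a ring `R`. -/
noncomputable def cmRingLocus (R : Type*) [CommRing R] : Set (PrimeSpectrum R) :=
  {𝔭 | moduleDim (Localization.AtPrime 𝔭.asIdeal) (Localization.AtPrime 𝔭.asIdeal)
    ≤ (moduleDepth (Localization.AtPrime 𝔭.asIdeal) (Localization.AtPrime 𝔭.asIdeal) :
        WithBot ℕ∞)}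

/-- The `n`-th codepth locus of a module. -/
noncomputable def codepthLocus (R M : Type*) [CommRing R] [AddCommGroup M] [Module R M]
    (n : ℕ) : Set (PrimeSpectrum R) :=
  {𝔭 | moduleCodepth (Localization.AtPrime 𝔭.asIdeal)
        (LocalizedModule 𝔭.asIdeal.primeCompl M) ≤ (n : ℕ∞)}

/-- A ring is catenary if any two saturated chains of primes with the same endpoints
have the same length. -/
def IsCatenary (R : Type*) [CommRing R] : Prop :=
  ∀ c₁ c₂ : RelSeries {(a, b) : PrimeSpectrum R × PrimeSpectrum R | a ⋖ b},
    c₁.head = c₂.head → c₁.last = c₂.last → c₁.length = c₂.length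

open Classical in
/-- The grade of an ideal `J` on a module `M`. -/
noncomputable def moduleGrade {R : Type*} (M : Type*) [CommRing R] [AddCommGroup M]
    [Module R M] (J : Ideal R) : ℕ∞ :=
  if J • (⊤ : Submodule R M) = ⊤ then ⊤
  else sSup {n : ℕ∞ | ∃ rs : List R, (rs.length : ℕ∞) = n ∧
    (∀ x ∈ rs, x ∈ J) ∧ RingTheory.Sequence.IsWeaklyRegular M rs}

/-- The Cohen–Macaulay locus of a module `M` over `R`. -/
noncomputable def cmLocus (R M : Type*) [CommRing R] [AddCommGroup M] [Module R M] :
    Set (PrimeSpectrum R) :=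
  {𝔭 | moduleDim (Localization.AtPrime 𝔭.asIdeal) (LocalizedModule 𝔭.asIdeal.primeCompl M)
    ≤ (moduleDepth (Localization.AtPrime 𝔭.asIdeal)
        (LocalizedModule 𝔭.asIdeal.primeCompl M) : WithBot ℕ∞)}

theorem stmt0
    (A₀ A M : Type*) [CommRing A₀] [CommRing A] [Algebra A₀ A]
    [IsNoetherianRing A₀] [IsNoetherianRing A]
    [AddCommGroup M] [Module A₀ M] [Module A M] [IsScalarTower A₀ A M]
    [Module.Finite A M]
    (𝒜 : ℕ → Submodule A₀ A) (ℳ : ℤ → Submodule A₀ M)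
    (hinj : Function.Injective (algebraMap A₀ A))
    (hA : DirectSum.IsInternal 𝒜) (hA0 : 𝒜 0 = 1)
    (hAmul : ∀ i j : ℕ, 𝒜 i * 𝒜 j ≤ 𝒜 (i + j))
    (hM : DirectSum.IsInternal ℳ)
    (hAM : ∀ (i : ℕ) (j : ℤ), ∀ a ∈ 𝒜 i, ∀ m ∈ ℳ j, a • m ∈ ℳ (i + j))
    (hhom : ∀ i : ℕ, 𝒜 (i + 1) = 𝒜 1 * 𝒜 i) :
    ∃ k : ℤ, ∀ t : ℤ, k ≤ t →
      Module.annihilator A₀ (ℳ t) = Module.annihilator A₀ (ℳ k) := by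
  classical
  letI : DirectSum.Decomposition ℳ := hM.chooseDecomposition
  -- commutation helper
  have hcomm : ∀ (c : A₀) (a : A) (y : M), a • c • y = c • a • y := by
    intro c a y
    rw [← algebraMap_smul A c y, ← mul_smul, mul_comm, mul_smul, algebraMap_smul]
  have h1mem : (1 : A) ∈ 𝒜 0 := by rw [hA0]; exact Submodule.one_le.mp le_rfl
  -- projection commutes with homogeneous smul
  have proj_smul : ∀ (i : ℕ) (a : A), a ∈ 𝒜 i → ∀ (x : M) (n : ℤ),
      (DirectSum.decompose ℳ (a • x) n : M) = a • (DirectSum.decompose ℳ x (n - i) : M) := by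
    intro i a ha x
    refine DirectSum.Decomposition.inductionOn ℳ
      (motive := fun x => ∀ n : ℤ, (DirectSum.decompose ℳ (a • x) n : M) =
        a • (DirectSum.decompose ℳ x (n - i) : M)) ?_ ?_ ?_ x
    · intro n; simp
    · intro j m n
      have hmem : a • (m : M) ∈ ℳ ((i : ℤ) + j) := hAM i j a ha m m.2
      by_cases h : n = (i : ℤ) + j
      · subst h
        rw [DirectSum.decompose_of_mem_same ℳ hmem,
          show (i : ℤ) + j - i = j by ring, DirectSum.decompose_of_mem_same ℳ m.2]
      · rw [DirectSum.decompose_of_mem_ne ℳ hmem (Ne.symm h),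
          DirectSum.decompose_of_mem_ne ℳ m.2 (show j ≠ n - i by omega), smul_zero]
    · intro x y hx hy n
      simp only [smul_add, DirectSum.decompose_add, DirectSum.add_apply, Submodule.coe_add,
        hx n, hy n]
  -- find d such that components of degree ≤ d generate
  set N : ℤ → Submodule A M := fun t => Submodule.span A {x | ∃ j ≤ t, x ∈ ℳ j} with hN
  have hNmono : Monotone N := by
    intro s t hst
    apply Submodule.span_mono
    rintro x ⟨j, hj, hx⟩
    exact ⟨j, le_trans hj hst, hx⟩
  obtain ⟨Q, ⟨d, rfl⟩, hmax⟩ :=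
    (IsWellFounded.wf (r := ((· > ·) : Submodule A M → Submodule A M → Prop))).has_min
      (Set.range N) ⟨N 0, 0, rfl⟩
  have hNd : ∀ t : ℤ, d ≤ t → N t = N d := by
    intro t ht
    by_contra hne
    exact hmax (N t) ⟨t, rfl⟩ (lt_of_le_of_ne (hNmono ht) (Ne.symm hne))
  have hNdtop : N d = ⊤ := by
    rw [eq_top_iff]
    intro x _
    have hx : x ∈ ⨆ j, ℳ j := by rw [hM.submodule_iSup_eq_top]; trivial
    have : (⨆ j, ℳ j) ≤ (N d).restrictScalars A₀ := by
      refine iSup_le fun j => ?_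
      intro y hy
      have : y ∈ N (max j d) := Submodule.subset_span ⟨j, le_max_left _ _, hy⟩
      rwa [hNd _ (le_max_right _ _)] at this
    exact this hx
  -- the target submodules
  set V : ℤ → Submodule A₀ M := fun n => Submodule.span A₀
    {x | ∃ (i : ℕ) (j : ℤ) (a : A) (m : M),
      a ∈ 𝒜 i ∧ m ∈ ℳ j ∧ (i : ℤ) + j = n ∧ j ≤ d ∧ x = a • m} with hV
  set P : ℤ → Submodule A₀ M := fun s => Submodule.span A₀
    {x | ∃ b ∈ 𝒜 1, ∃ m ∈ ℳ s, x = b • m} with hP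
  -- homogeneous smul maps V (n - i) into V n
  have hsmulV : ∀ (i : ℕ) (a : A), a ∈ 𝒜 i → ∀ (n : ℤ) (y : M),
      y ∈ V (n - i) → a • y ∈ V n := by
    intro i a ha n y hy
    refine Submodule.span_induction ?_ ?_ ?_ ?_ hy
    · rintro x ⟨i', j, a', m, ha', hm, hij, hjd, rfl⟩
      rw [← mul_smul]
      exact Submodule.subset_span
        ⟨i + i', j, a * a', m, hAmul i i' (Submodule.mul_mem_mul ha ha'), hm,
          by push_cast; omega, hjd, rfl⟩
    · rw [smul_zero]; exact zero_mem _
    · intro x y _ _ hx hy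
      rw [smul_add]; exact add_mem hx hy
    · intro c x _ hx
      rw [hcomm]; exact Submodule.smul_mem _ c hx
  -- every projection lands in V
  have claim1 : ∀ (x : M) (n : ℤ), (DirectSum.decompose ℳ x n : M) ∈ V n := by
    set W : Submodule A M :=
      { carrier := {x | ∀ n : ℤ, (DirectSum.decompose ℳ x n : M) ∈ V n}
        add_mem' := by
          intro x y hx hy n
          rw [DirectSum.decompose_add, DirectSum.add_apply, Submodule.coe_add]
          exact add_mem (hx n) (hy n)
        zero_mem' := by intro n; rw [DirectSum.decompose_zero]; simpa using zero_mem _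
        smul_mem' := by
          intro c x hx
          have hc : c ∈ ⨆ i, 𝒜 i := by rw [hA.submodule_iSup_eq_top]; trivial
          refine Submodule.iSup_induction 𝒜 (motive := fun c : A =>
            ∀ n : ℤ, (DirectSum.decompose ℳ (c • x) n : M) ∈ V n) hc ?_ ?_ ?_
          · intro i a ha n
            rw [proj_smul i a ha x n]
            exact hsmulV i a ha n _ (hx (n - i))
          · intro n
            rw [zero_smul, DirectSum.decompose_zero]
            simpa using zero_mem _
          · intro a b hx' hy' n
            rw [add_smul, DirectSum.decompose_add, DirectSum.add_apply, Submodule.coe_add]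
            exact add_mem (hx' n) (hy' n) } with hW
    intro x n
    have hxW : x ∈ W := by
      have : N d ≤ W := by
        rw [hN, Submodule.span_le]
        rintro y ⟨j, hj, hy⟩
        intro n
        by_cases h : n = j
        · subst h
          rw [DirectSum.decompose_of_mem_same ℳ hy]
          exact Submodule.subset_span
            ⟨0, n, 1, y, h1mem, hy, by push_cast; ring, le_trans hj le_rfl |>.trans le_rfl,
              (one_smul A y).symm⟩
        · rw [DirectSum.decompose_of_mem_ne ℳ hy (Ne.symm h)]
          exact zero_mem _
      exact this (hNdtop ▸ Submodule.mem_top)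
    exact hxW n
  -- V n ≤ P (n - 1) for n ≥ d + 1
  have claim2 : ∀ n : ℤ, d + 1 ≤ n → V n ≤ P (n - 1) := by
    intro n hn
    rw [hV, Submodule.span_le]
    rintro x ⟨i, j, a, m, ha, hm, hij, hjd, rfl⟩
    cases i with
    | zero => exfalso; omega
    | succ i' =>
      rw [hhom i'] at ha
      refine Submodule.mul_induction_on ha ?_ ?_
      · intro b hb c hc
        have hcm : c • m ∈ ℳ (n - 1) := by
          have := hAM i' j c hc m hm
          rwa [show (i' : ℤ) + j = n - 1 by push_cast at hij ⊢; omega] at this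
        rw [mul_smul]
        exact Submodule.subset_span ⟨b, hb, c • m, hcm, rfl⟩
      · intro x y hx hy
        rw [add_smul]
        exact add_mem hx hy
  -- annihilator chain increases
  have hstep : ∀ t : ℤ, d ≤ t →
      Module.annihilator A₀ (ℳ t) ≤ Module.annihilator A₀ (ℳ (t + 1)) := by
    intro t ht r hr
    rw [Module.mem_annihilator] at hr ⊢
    intro m
    have hr' : ∀ y ∈ ℳ t, r • y = 0 := by
      intro y hy
      have := hr ⟨y, hy⟩
      exact congrArg Subtype.val this
    apply Subtype.ext
    rw [SetLike.val_smul]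
    show r • (m : M) = 0
    have hmV : (m : M) ∈ P t := by
      have h1 : (m : M) ∈ V (t + 1) := by
        have := claim1 (m : M) (t + 1)
        rwa [DirectSum.decompose_of_mem_same ℳ m.2] at this
      have h2 := claim2 (t + 1) (by omega) h1
      rwa [show t + 1 - 1 = t by ring] at h2
    refine Submodule.span_induction ?_ ?_ ?_ ?_ hmV
    · rintro x ⟨b, hb, y, hy, rfl⟩
      rw [← hcomm, hr' y hy, smul_zero]
    · rw [smul_zero]
    · intro x y _ _ hx hy
      rw [smul_add, hx, hy, add_zero]
    · intro c x _ hx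
      rw [← mul_smul, mul_comm, mul_smul, hx, smul_zero]
  -- stabilize
  have hmono : ∀ n : ℕ, Module.annihilator A₀ (ℳ (d + 1 + n)) ≤
      Module.annihilator A₀ (ℳ (d + 1 + (n + 1))) := by
    intro n
    have := hstep (d + 1 + n) (by omega)
    rwa [show d + 1 + (n : ℤ) + 1 = d + 1 + ((n : ℕ) + 1 : ℕ) by push_cast; ring] at this
  set f : ℕ →o Ideal A₀ :=
    ⟨fun n => Module.annihilator A₀ (ℳ (d + 1 + n)), monotone_nat_of_le_succ hmono⟩ with hf
  obtain ⟨nn, hnn⟩ := monotone_stabilizes_iff_noetherian.mpr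
    (inferInstance : IsNoetherian A₀ A₀) f
  refine ⟨d + 1 + nn, fun t ht => ?_⟩
  obtain ⟨mm, rfl⟩ : ∃ mm : ℕ, t = d + 1 + mm := ⟨(t - (d + 1)).toNat, by omega⟩
  exact (hnn mm (by omega)).symm
end

section
/- Let $A = \bigoplus_{i \ge 0} A_i$ be a noetherian graded ring with $(A_0, \mathfrak{m}_0)$ local, and let $M = \bigoplus_{i \in \mathbb{Z}} M_i$ be a finitely generated graded $A$-module. Then $\dim_{A_0}(M) = \sup\{\dim_{A_0}(M_i) \mid i \in \mathbb{Z}\}$, where $\dim_{A_0}(N) = \dim(A_0/\operatorname{Ann}_{A_0}(N))$. -/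
open RingTheory.Sequence

open Order in

/-- Key general lemma: if every prime over `J` contains some `I i`, then
`dim R/J ≤ ⨆ i, dim R/(I i)`. -/
lemma ringKrullDim_quotient_le_iSup' {R : Type*} [CommRing R] {ι : Type*}
    (J : Ideal R) (I : ι → Ideal R)
    (key : ∀ p : Ideal R, p.IsPrime → J ≤ p → ∃ i, I i ≤ p) :
    ringKrullDim (R ⧸ J) ≤ ⨆ i, ringKrullDim (R ⧸ I i) := by
  show krullDim (PrimeSpectrum (R ⧸ J)) ≤ _
  rw [krullDim]
  refine iSup_le fun c => ?_
  -- map the chain down into Spec R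
  have hsm : StrictMono (fun q : PrimeSpectrum (R ⧸ J) =>
      (⟨Ideal.comap (Ideal.Quotient.mk J) q.asIdeal, inferInstance⟩ : PrimeSpectrum R)) := by
    intro q q' h
    rw [← PrimeSpectrum.asIdeal_lt_asIdeal]
    refine lt_of_le_of_ne (Ideal.comap_mono h.le) fun he => ?_
    exact h.ne (PrimeSpectrum.ext
      (Ideal.comap_injective_of_surjective _ Ideal.Quotient.mk_surjective he))
  let d : LTSeries (PrimeSpectrum R) := c.map _ hsm
  have hJd : ∀ j, J ≤ (d j).asIdeal := fun j =>
    Ideal.mk_ker (I := J) ▸ Ideal.ker_le_comap _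
  obtain ⟨i, hi⟩ := key (d 0).asIdeal (d 0).2 (hJd 0)
  have hle : ∀ j, I i ≤ (d j).asIdeal := fun j =>
    hi.trans (d.monotone (Fin.zero_le j))
  have hker : ∀ j, RingHom.ker (Ideal.Quotient.mk (I i)) ≤ (d j).asIdeal := fun j => by
    rw [Ideal.mk_ker]; exact hle j
  have hcm : ∀ j, Ideal.comap (Ideal.Quotient.mk (I i))
      (Ideal.map (Ideal.Quotient.mk (I i)) (d j).asIdeal) = (d j).asIdeal := fun j => by
    rw [Ideal.comap_map_of_surjective _ Ideal.Quotient.mk_surjective]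
    exact sup_eq_left.mpr (hker j)
  let e : LTSeries (PrimeSpectrum (R ⧸ I i)) :=
    { length := d.length
      toFun := fun j => ⟨Ideal.map (Ideal.Quotient.mk (I i)) (d j).asIdeal,
        Ideal.map_isPrime_of_surjective Ideal.Quotient.mk_surjective (hker j)⟩
      step := fun j => by
        have h1 : d j.castSucc < d j.succ := d.step j
        show (_ : PrimeSpectrum (R ⧸ I i)) < _
        rw [← PrimeSpectrum.asIdeal_lt_asIdeal]
        refine lt_of_le_of_ne (Ideal.map_mono h1.le) fun he => ?_
        exact h1.ne (PrimeSpectrum.ext (by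
          rw [← hcm j.castSucc, ← hcm j.succ]
          exact congrArg (Ideal.comap (Ideal.Quotient.mk (I i))) he)) }
  have hlen : (c.length : WithBot ℕ∞) = e.length := rfl
  calc (c.length : WithBot ℕ∞) = e.length := hlen
    _ ≤ ringKrullDim (R ⧸ I i) := Order.LTSeries.length_le_krullDim e
    _ ≤ ⨆ i, ringKrullDim (R ⧸ I i) := le_iSup (fun i => ringKrullDim (R ⧸ I i)) i

theorem stmt3
    (A₀ A M : Type*) [CommRing A₀] [CommRing A] [Algebra A₀ A]
    [IsNoetherianRing A₀] [IsNoetherianRing A]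
    [AddCommGroup M] [Module A₀ M] [Module A M] [IsScalarTower A₀ A M]
    [Module.Finite A M]
    (𝒜 : ℕ → Submodule A₀ A) (ℳ : ℤ → Submodule A₀ M)
    (hinj : Function.Injective (algebraMap A₀ A))
    (hA : DirectSum.IsInternal 𝒜) (hA0 : 𝒜 0 = 1)
    (hAmul : ∀ i j : ℕ, 𝒜 i * 𝒜 j ≤ 𝒜 (i + j))
    (hM : DirectSum.IsInternal ℳ)
    (hAM : ∀ (i : ℕ) (j : ℤ), ∀ a ∈ 𝒜 i, ∀ m ∈ ℳ j, a • m ∈ ℳ (i + j))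
    [IsLocalRing A₀] :
    moduleDim A₀ M = ⨆ i : ℤ, moduleDim A₀ (ℳ i) := by
  classical
  have hann : ∀ i : ℤ, Module.annihilator A₀ M ≤ Module.annihilator A₀ (ℳ i) := by
    intro i a ha
    rw [Module.mem_annihilator] at ha ⊢
    intro m
    exact Subtype.ext (by simpa using ha (m : M))
  have key : ∀ p : Ideal A₀, p.IsPrime → Module.annihilator A₀ M ≤ p →
      ∃ i, Module.annihilator A₀ (ℳ i) ≤ p := by
    intro p hp hJp
    by_contra hcon
    push_neg at hcon
    have hex : ∀ i : ℤ, ∃ x ∈ Module.annihilator A₀ (ℳ i), x ∉ p :=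
      fun i => SetLike.not_le_iff_exists.mp (hcon i)
    choose f hf1 hf2 using hex
    obtain ⟨S, hS⟩ : ∃ S : Finset M, Submodule.span A (S : Set M) = ⊤ :=
      Module.Finite.fg_top (R := A) (M := M)
    have hmem : ∀ g : M, ∃ T : Finset ℤ, g ∈ ⨆ i ∈ T, ℳ i := fun g =>
      Submodule.mem_iSup_iff_exists_finset.mp (hM.submodule_iSup_eq_top ▸ Submodule.mem_top)
    choose D hD using hmem
    set T : Finset ℤ := S.biUnion D with hT
    set t : A₀ := ∏ i ∈ T, f i with ht
    have htp : t ∈ p.primeCompl := Submonoid.prod_mem _ (fun i _ => hf2 i)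
    have hkill : ∀ i ∈ T, ∀ x ∈ ℳ i, t • x = 0 := by
      intro i hiT x hx
      have h0 : f i • x = 0 := congrArg Subtype.val
        (Module.mem_annihilator.mp (hf1 i) (⟨x, hx⟩ : ℳ i))
      rw [ht, ← Finset.prod_erase_mul T f hiT, mul_smul, h0, smul_zero]
    have hkillg : ∀ g ∈ (S : Set M), t • g = 0 := by
      intro g hg
      have hmono : (⨆ i ∈ D g, ℳ i) ≤ ⨆ i ∈ T, ℳ i :=
        biSup_mono (fun i hi => Finset.mem_biUnion.mpr ⟨g, hg, hi⟩)
      have h1 : g ∈ ⨆ i ∈ T, ℳ i := hmono (hD g)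
      have h2 : (⨆ i ∈ T, ℳ i) ≤ LinearMap.ker (LinearMap.lsmul A₀ M t) :=
        iSup_le fun i => iSup_le fun hi x hx => hkill i hi x hx
      exact h2 h1
    have hcomm : ∀ (a : A) (m : M), t • (a • m) = a • (t • m) := by
      intro a m
      rw [← smul_assoc, Algebra.smul_def, mul_comm, mul_smul, algebraMap_smul]
    have htM : t ∈ Module.annihilator A₀ M := by
      rw [Module.mem_annihilator]
      let ψ : M →ₗ[A] M :=
        { toFun := fun m => t • m
          map_add' := fun x y => smul_add t x y
          map_smul' := fun a m => hcomm a m }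
      have hspan : Submodule.span A (S : Set M) ≤ LinearMap.ker ψ :=
        Submodule.span_le.mpr fun g hg => hkillg g hg
      intro m
      have hm : m ∈ Submodule.span A (S : Set M) := hS.symm ▸ Submodule.mem_top
      exact hspan hm
    exact htp (hJp htM)
  simp only [moduleDim]
  apply le_antisymm
  · exact ringKrullDim_quotient_le_iSup' _ _ key
  · refine iSup_le fun i => ?_
    refine ringKrullDim_le_of_surjective (Ideal.Quotient.factor (hann i)) fun y => ?_
    obtain ⟨x, rfl⟩ := Ideal.Quotient.mk_surjective y
    exact ⟨Ideal.Quotient.mk _ x, Ideal.Quotient.factor_mk _ x⟩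
end

section
/- Let $A = \bigoplus_{i \ge 0} A_i$ be a noetherian graded ring and $M$ a finitely generated graded $A$-module. A prime ideal $\mathfrak{p}$ of $A_0$ belongs to $\operatorname{Ass}_{A_0}(M)$ if and only if $\operatorname{depth}_{(A_0)_\mathfrak{p}}(M_\mathfrak{p}) = 0$. -/
open RingTheory.Sequence

section Aux

section AssFinite

variable {R M : Type*} [CommRing R] [AddCommGroup M] [Module R M]

lemma mem_ass_iff' {R M : Type*} [CommRing R] [AddCommGroup M] [Module R M] [IsNoetherianRing R]
    {I : Ideal R} : I ∈ associatedPrimes R M ↔ I.IsPrime ∧ ∃ x : M, I = (R ∙ x).annihilator := by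
  rw [AssociatedPrimes.mem_iff, isAssociatedPrime_iff]
  have : ∀ x : M, (⊥ : Submodule R M).colon {x} = (R ∙ x).annihilator := fun x => by
    ext r
    rw [Submodule.mem_colon_singleton, Submodule.mem_bot, Submodule.mem_annihilator_span_singleton]
  simp only [this]

lemma ass_subset_union [IsNoetherianRing R] (N : Submodule R M) :
    associatedPrimes R M ⊆ associatedPrimes R N ∪ associatedPrimes R (M ⧸ N) := by
  intro Q hQ
  obtain ⟨hQp, x, rfl⟩ := mem_ass_iff'.mp hQ
  by_cases h : ∃ r : R, r • x ∈ N ∧ r • x ≠ 0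
  · obtain ⟨r, hrN, hrne⟩ := h
    left
    have hr : r ∉ (R ∙ x).annihilator := by
      rw [Submodule.mem_annihilator_span_singleton]; exact hrne
    refine mem_ass_iff'.mpr ⟨hQp, ⟨r • x, hrN⟩, ?_⟩
    ext c
    rw [Submodule.mem_annihilator_span_singleton, Submodule.mem_annihilator_span_singleton]
    have key : (c • (⟨r • x, hrN⟩ : N) = 0) ↔ (c * r) • x = 0 := by
      rw [← Subtype.coe_inj, mul_smul]; rfl
    rw [key]
    constructor
    · intro hc
      rw [mul_smul, smul_comm, hc, smul_zero]
    · intro hc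
      have hcr : c * r ∈ (R ∙ x).annihilator :=
        (Submodule.mem_annihilator_span_singleton _ _).mpr hc
      rcases hQp.mem_or_mem hcr with h1 | h1
      · exact (Submodule.mem_annihilator_span_singleton _ _).mp h1
      · exact absurd h1 hr
  · push_neg at h
    right
    refine mem_ass_iff'.mpr ⟨hQp, N.mkQ x, ?_⟩
    ext c
    rw [Submodule.mem_annihilator_span_singleton, Submodule.mem_annihilator_span_singleton]
    rw [show c • N.mkQ x = N.mkQ (c • x) from (map_smul _ _ _).symm]
    rw [show N.mkQ (c • x) = Submodule.Quotient.mk (c • x) from rfl,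
      Submodule.Quotient.mk_eq_zero]
    exact ⟨fun hc => by rw [hc]; exact N.zero_mem, fun hc => h c hc⟩

lemma ass_cyclic [IsNoetherianRing R] {y : M} (hQ : ((R ∙ y).annihilator).IsPrime) :
    associatedPrimes R ↥(R ∙ y) ⊆ {(R ∙ y).annihilator} := by
  intro P hP
  obtain ⟨hPp, u, rfl⟩ := mem_ass_iff'.mp hP
  have hu : (u : M) ∈ R ∙ y := u.2
  obtain ⟨r, hr⟩ := Submodule.mem_span_singleton.mp hu
  have hune : u ≠ 0 := by
    intro h
    rw [h] at hPp
    rw [show (R ∙ (0 : ↥(R ∙ y))) = ⊥ by simp, Submodule.annihilator_bot] at hPp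
    exact hPp.ne_top rfl
  have hrQ : r ∉ (R ∙ y).annihilator := by
    rw [Submodule.mem_annihilator_span_singleton]
    intro h
    apply hune
    rw [← Subtype.coe_inj, ← hr]
    exact_mod_cast h
  simp only [Set.mem_singleton_iff]
  ext c
  rw [Submodule.mem_annihilator_span_singleton]
  have hcu : (c • u = 0) ↔ (c * r) • y = 0 := by
    rw [← Subtype.coe_inj]
    simp only [Submodule.coe_smul, ZeroMemClass.coe_zero, ← hr, mul_smul]
  rw [hcu, ← Submodule.mem_annihilator_span_singleton]
  constructor
  · intro hc
    rcases hQ.mem_or_mem hc with h1 | h1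
    · exact h1
    · exact absurd h1 hrQ
  · intro hc
    rw [Submodule.mem_annihilator_span_singleton] at hc ⊢
    rw [mul_comm, mul_smul, hc, smul_zero]

end AssFinite

section AssFiniteMain

variable {R M : Type*} [CommRing R] [AddCommGroup M] [Module R M]

lemma assFinite [IsNoetherianRing R] [Module.Finite R M] :
    (associatedPrimes R M).Finite := by
  haveI : IsNoetherian R M := inferInstance
  suffices H : ∀ N : Submodule R M, (associatedPrimes R (M ⧸ N)).Finite by
    have h0 := H ⊥
    have e : (M ⧸ (⊥ : Submodule R M)) ≃ₗ[R] M := Submodule.quotEquivOfEqBot ⊥ rfl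
    rwa [LinearEquiv.AssociatedPrimes.eq e] at h0
  intro N
  induction N using IsNoetherian.induction with
  | _ N IH =>
  by_cases hs : Subsingleton (M ⧸ N)
  · rw [associatedPrimes.eq_empty_of_subsingleton]
    exact Set.finite_empty
  · haveI : Nontrivial (M ⧸ N) := not_subsingleton_iff_nontrivial.mp hs
    obtain ⟨Q, hQ⟩ := associatedPrimes.nonempty R (M ⧸ N)
    obtain ⟨hQp, ybar, hann⟩ := mem_ass_iff'.mp hQ
    obtain ⟨y, rfl⟩ := Submodule.Quotient.mk_surjective N ybar
    have hy : (Submodule.Quotient.mk y : M ⧸ N) ≠ 0 := by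
      intro h
      rw [h] at hann
      rw [show (R ∙ (0 : M ⧸ N)) = ⊥ by simp, Submodule.annihilator_bot] at hann
      exact hQp.ne_top hann
    set N' : Submodule R M := N ⊔ (R ∙ y) with hN'
    have hlt : N < N' := by
      refine lt_of_le_of_ne le_sup_left ?_
      intro h
      apply hy
      rw [Submodule.Quotient.mk_eq_zero]
      rw [h]
      exact le_sup_right (a := N) (Submodule.mem_span_singleton_self y)
    have hmap : N'.map N.mkQ = (R ∙ (Submodule.Quotient.mk y : M ⧸ N)) := by
      rw [hN', Submodule.map_sup, Submodule.map_span]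
      rw [show N.map N.mkQ = ⊥ by
        rw [eq_bot_iff]; rintro z ⟨w, hw, rfl⟩
        simpa [Submodule.Quotient.mk_eq_zero] using hw]
      rw [bot_sup_eq, Set.image_singleton]
      rfl
    have hsub := ass_subset_union (R := R) (M := M ⧸ N)
      (R ∙ (Submodule.Quotient.mk y : M ⧸ N))
    have h1 : associatedPrimes R ↥(R ∙ (Submodule.Quotient.mk y : M ⧸ N)) ⊆ {Q} := by
      have := ass_cyclic (R := R) (M := M ⧸ N)
        (y := (Submodule.Quotient.mk y : M ⧸ N)) (hann ▸ hQp)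
      rwa [← hann] at this
    have h2 : (associatedPrimes R ((M ⧸ N) ⧸ (R ∙ (Submodule.Quotient.mk y : M ⧸ N)))).Finite := by
      rw [← hmap]
      have e := Submodule.quotientQuotientEquivQuotient N N' hlt.le
      rw [LinearEquiv.AssociatedPrimes.eq e]
      exact IH N' hlt
    exact ((Set.finite_singleton Q).union h2).subset
      (hsub.trans (Set.union_subset_union_left _ h1))

end AssFiniteMain


section LocHelpers

variable {A₀ : Type*} [CommRing A₀] {M : Type*} [AddCommGroup M] [Module A₀ M]

lemma lm_mk_eq_zero {S : Submonoid A₀} (x : M) (s : S) :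
    LocalizedModule.mk x s = 0 ↔ ∃ t : S, (t : A₀) • x = 0 := by
  constructor
  · intro h
    rw [← LocalizedModule.zero_mk (1 : S), LocalizedModule.mk_eq] at h
    obtain ⟨u, hu⟩ := h
    refine ⟨u, ?_⟩
    simpa [Submonoid.smul_def] using hu
  · rintro ⟨t, ht⟩
    rw [← LocalizedModule.zero_mk (t * s), ← LocalizedModule.mk_cancel_common_left t s x,
      Submonoid.smul_def, ht]

variable (𝔭 : Ideal A₀) [𝔭.IsPrime]

local notation "R₀" => Localization.AtPrime 𝔭
local notation "N" => LocalizedModule 𝔭.primeCompl M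

-- smul by an element of the maximal ideal on mk x 1, when 𝔭 kills x
lemma maxIdeal_smul_mk_eq_zero (x : M) (hx : ∀ p ∈ 𝔭, p • x = 0)
    (r : R₀) (hr : r ∈ IsLocalRing.maximalIdeal R₀) :
    r • (LocalizedModule.mk x (1 : 𝔭.primeCompl) : N) = 0 := by
  rw [← Localization.AtPrime.map_eq_maximalIdeal] at hr
  rw [IsLocalization.mem_map_algebraMap_iff 𝔭.primeCompl] at hr
  obtain ⟨⟨p, t⟩, hpt⟩ := hr
  have key : (algebraMap A₀ R₀ (t : A₀)) • (r • (LocalizedModule.mk x 1 : N)) = 0 := by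
    rw [smul_smul, mul_comm, hpt, algebraMap_smul, LocalizedModule.smul'_mk,
      hx p p.2, LocalizedModule.zero_mk]
  obtain ⟨u, hu⟩ := IsLocalization.map_units R₀ t
  have key2 : u • (r • (LocalizedModule.mk x (1 : 𝔭.primeCompl) : N)) = u • (0 : N) := by
    rw [Units.smul_def, hu, smul_zero]; exact key
  exact (smul_left_cancel_iff u).mp key2

-- elements of the maximal ideal smul: r • mk y t' = mk (p • y) (t * t') for suitable p, t
lemma maxIdeal_smul_top_le (h : IsLocalRing.maximalIdeal R₀ • (⊤ : Submodule R₀ N) = ⊤) :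
    ∀ x : M, ∃ s : 𝔭.primeCompl, s • x ∈ (𝔭 • ⊤ : Submodule A₀ M) := by
  classical
  set K : Submodule R₀ N :=
    { carrier := {z | ∃ (s : 𝔭.primeCompl) (w : M),
        w ∈ (𝔭 • ⊤ : Submodule A₀ M) ∧ z = LocalizedModule.mk w s}
      add_mem' := by
        rintro z₁ z₂ ⟨s₁, w₁, hw₁, rfl⟩ ⟨s₂, w₂, hw₂, rfl⟩
        refine ⟨s₁ * s₂, s₂ • w₁ + s₁ • w₂, ?_, ?_⟩
        · exact Submodule.add_mem _ (Submodule.smul_mem _ _ hw₁) (Submodule.smul_mem _ _ hw₂)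
        · rw [LocalizedModule.mk_add_mk]
      zero_mem' := ⟨1, 0, Submodule.zero_mem _, (LocalizedModule.zero_mk 1).symm⟩
      smul_mem' := by
        intro c z hz
        obtain ⟨s, w, hw, rfl⟩ := hz
        induction c using Localization.induction_on with
        | H y =>
          obtain ⟨a, t⟩ := y
          refine ⟨t * s, a • w, Submodule.smul_mem _ _ hw, ?_⟩
          rw [LocalizedModule.mk_smul_mk] } with hK
  have hle : (⊤ : Submodule R₀ N) ≤ K := by
    rw [← h]
    refine Submodule.smul_le.mpr ?_
    intro r hr z _
    rw [← Localization.AtPrime.map_eq_maximalIdeal] at hr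
    rw [IsLocalization.mem_map_algebraMap_iff 𝔭.primeCompl] at hr
    obtain ⟨⟨p, t⟩, hpt⟩ := hr
    induction z using LocalizedModule.induction_on with
    | h y t' =>
      refine ⟨t * t', (p : A₀) • y, Submodule.smul_mem_smul p.2 trivial, ?_⟩
      have hu := IsLocalization.map_units R₀ t
      obtain ⟨u, hu⟩ := hu
      have key : (algebraMap A₀ R₀ (t : A₀)) • (r • (LocalizedModule.mk y t' : N)) =
          (algebraMap A₀ R₀ (t : A₀)) • (LocalizedModule.mk ((p : A₀) • y) (t * t') : N) := by
        rw [smul_smul, mul_comm, hpt, algebraMap_smul, algebraMap_smul,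
          LocalizedModule.smul'_mk, LocalizedModule.smul'_mk,
          ← LocalizedModule.mk_cancel_common_left t t' ((p : A₀) • y), Submonoid.smul_def]
      have key2 : u • (r • (LocalizedModule.mk y t' : N)) =
          u • (LocalizedModule.mk ((p : A₀) • y) (t * t') : N) := by
        rw [Units.smul_def, Units.smul_def, hu]; exact key
      exact (smul_left_cancel_iff u).mp key2
  intro x
  have hx : (LocalizedModule.mk x (1 : 𝔭.primeCompl) : N) ∈ K := hle trivial
  obtain ⟨s, w, hw, heq⟩ := hx
  rw [LocalizedModule.mk_eq] at heq
  obtain ⟨u, hu⟩ := heq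
  refine ⟨u * s, ?_⟩
  have : (u * s) • x = u • w := by
    rw [mul_smul]
    simpa [one_smul] using hu
  rw [this]
  exact Submodule.smul_mem _ _ hw

end LocHelpers

section GradedNakayama

open DirectSum

variable {A₀ A M : Type*} [CommRing A₀] [CommRing A] [Algebra A₀ A]
  [AddCommGroup M] [Module A₀ M] [Module A M] [IsScalarTower A₀ A M]
  {𝒜 : ℕ → Submodule A₀ A} {ℳ : ℤ → Submodule A₀ M}

lemma kl_deg_zero [DirectSum.Decomposition 𝒜] [DirectSum.Decomposition ℳ]
    (hAM : ∀ (i : ℕ) (j : ℤ), ∀ a ∈ 𝒜 i, ∀ m ∈ ℳ j, a • m ∈ ℳ (i + j))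
    (a : A) (j : ℤ) (x : M) (hx : x ∈ ℳ j) :
    ((DirectSum.decompose 𝒜 a 0 : A)) • x = (DirectSum.decompose ℳ (a • x) j : M) := by
  induction a using DirectSum.Decomposition.inductionOn 𝒜 with
  | zero =>
    simp only [DirectSum.decompose_zero, DirectSum.zero_apply, ZeroMemClass.coe_zero,
      zero_smul, smul_zero]
  | homogeneous m =>
    rename_i i
    by_cases hi : (i : ℕ) = 0
    · subst hi
      rw [DirectSum.decompose_of_mem_same 𝒜 m.2]
      have hmem := hAM 0 j (m : A) m.2 x hx
      rw [show ((0 : ℕ) : ℤ) + j = j by simp] at hmem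
      rw [DirectSum.decompose_of_mem_same ℳ hmem]
    · rw [DirectSum.decompose_of_mem_ne 𝒜 m.2 hi, zero_smul]
      have hmem := hAM i j (m : A) m.2 x hx
      rw [DirectSum.decompose_of_mem_ne ℳ hmem (by intro hh; apply hi; omega)]
  | add a a' ha ha' =>
    rw [DirectSum.decompose_add, DirectSum.add_apply, Submodule.coe_add, add_smul, ha, ha',
      add_smul, DirectSum.decompose_add, DirectSum.add_apply, Submodule.coe_add]

set_option maxHeartbeats 1000000 in
lemma graded_nakayama [Module.Finite A M]
    (hA : DirectSum.IsInternal 𝒜) (hA0 : 𝒜 0 = 1)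
    (hM : DirectSum.IsInternal ℳ)
    (hAM : ∀ (i : ℕ) (j : ℤ), ∀ a ∈ 𝒜 i, ∀ m ∈ ℳ j, a • m ∈ ℳ (i + j))
    (𝔭 : Ideal A₀) [𝔭.IsPrime]
    (h : IsLocalRing.maximalIdeal (Localization.AtPrime 𝔭) •
      (⊤ : Submodule (Localization.AtPrime 𝔭) (LocalizedModule 𝔭.primeCompl M)) = ⊤) :
    Subsingleton (LocalizedModule 𝔭.primeCompl M) := by
  classical
  letI := hA.chooseDecomposition
  letI := hM.chooseDecomposition
  have H1 := maxIdeal_smul_top_le 𝔭 h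
  set I : Ideal A := Ideal.map (algebraMap A₀ A) 𝔭 with hI
  -- push the A₀-statement into an A-statement
  have hsub : ∀ w ∈ (𝔭 • ⊤ : Submodule A₀ M), w ∈ (I • ⊤ : Submodule A M) := by
    intro w hw
    refine Submodule.smul_induction_on hw ?_ ?_
    · intro p hp m _
      rw [← algebraMap_smul A p m]
      exact Submodule.smul_mem_smul (Ideal.mem_map_of_mem _ hp) trivial
    · intro z₁ z₂ h₁ h₂
      exact Submodule.add_mem _ h₁ h₂
  have H2 : ∀ x : M, ∃ s : 𝔭.primeCompl, algebraMap A₀ A (s : A₀) • x ∈ (I • ⊤ : Submodule A M) := by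
    intro x
    obtain ⟨s, hs⟩ := H1 x
    exact ⟨s, by rw [algebraMap_smul]; exact hsub _ hs⟩
  obtain ⟨S, hS⟩ := Module.Finite.fg_top (R := A) (M := M)
  choose f hf using H2
  set s : 𝔭.primeCompl := ∏ x ∈ S, f x with hs
  set c : A := algebraMap A₀ A (s : A₀) with hc
  have H3 : ∀ x : M, c • x ∈ (I • ⊤ : Submodule A M) := by
    have hgen : ∀ x ∈ S, c • x ∈ (I • ⊤ : Submodule A M) := by
      intro x hx
      have hprod : (∏ y ∈ S.erase x, f y) * f x = ∏ y ∈ S, f y := Finset.prod_erase_mul S f hx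
      rw [hc, hs, ← hprod]
      push_cast
      rw [mul_smul]
      exact Submodule.smul_mem _ _ (hf x)
    have hJ : Submodule.span A (S : Set M) ≤
        (I • ⊤ : Submodule A M).comap (LinearMap.lsmul A M c) := by
      rw [Submodule.span_le]
      intro x hx
      rw [SetLike.mem_coe, Submodule.mem_comap]
      rw [show LinearMap.lsmul A M c x = c • x from rfl]
      exact hgen x hx
    intro x
    have hx : x ∈ Submodule.span A (S : Set M) := by rw [hS]; trivial
    exact hJ hx
  -- Cayley-Hamilton
  set fEnd : Module.End A M := algebraMap A (Module.End A M) c with hfEnd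
  have hrange : LinearMap.range fEnd ≤ I • ⊤ := by
    rintro z ⟨x, rfl⟩
    rw [hfEnd, Module.algebraMap_end_apply]
    exact H3 x
  obtain ⟨P, hmonic, -, hcoeff, haeval⟩ :=
    LinearMap.exists_monic_and_natDegree_eq_and_coeff_mem_pow_and_aeval_eq_zero A fEnd I hrange
  set u : A := P.eval c with hu_def
  have hu : ∀ x : M, u • x = 0 := by
    have h0 : algebraMap A (Module.End A M) u = 0 := by
      rw [hu_def, ← Polynomial.aeval_algebraMap_apply_eq_algebraMap_eval, ← hfEnd, haeval]
    intro x
    rw [← Module.algebraMap_end_apply (S := A), h0]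
    rfl
  set n : ℕ := P.natDegree with hn
  have hb : u - c ^ n ∈ I := by
    have heval : u = (∑ i ∈ Finset.range n, P.coeff i * c ^ i) + c ^ n := by
      rw [hu_def, Polynomial.eval_eq_sum_range, Finset.sum_range_succ, ← hn,
        hmonic.coeff_natDegree, one_mul]
    rw [heval, add_sub_cancel_right]
    refine Ideal.sum_mem _ ?_
    intro i hi
    rw [Finset.mem_range] at hi
    exact Ideal.mul_mem_right _ _ (Ideal.pow_le_self (by omega) (hcoeff i))
  -- extract the degree-zero component
  have hb0 : (DirectSum.decompose 𝒜 (u - c ^ n) 0 : A) ∈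
      Submodule.map (Algebra.linearMap A₀ A) 𝔭 := by
    have hb' : u - c ^ n ∈ (𝔭 • ⊤ : Submodule A₀ A) := by
      rw [Ideal.smul_top_eq_map]
      exact hb
    refine Submodule.smul_induction_on hb' ?_ ?_
    · intro p hp a _
      rw [DirectSum.decompose_smul]
      have : ((p • DirectSum.decompose 𝒜 a) 0 : A) = p • (DirectSum.decompose 𝒜 a 0 : A) := by
        rfl
      rw [this]
      have hmem : (DirectSum.decompose 𝒜 a 0 : A) ∈ (1 : Submodule A₀ A) := by
        rw [← hA0]; exact (DirectSum.decompose 𝒜 a 0).2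
      rw [Submodule.mem_one] at hmem
      obtain ⟨d, hd⟩ := hmem
      exact Submodule.mem_map.mpr ⟨p * d, 𝔭.mul_mem_right d hp,
        by rw [Algebra.linearMap_apply, map_mul, hd, ← Algebra.smul_def]⟩
    · intro z₁ z₂ h₁ h₂
      rw [DirectSum.decompose_add, DirectSum.add_apply, Submodule.coe_add]
      exact Submodule.add_mem _ h₁ h₂
  obtain ⟨q, hq𝔭, hq⟩ := Submodule.mem_map.mp hb0
  have hcn : (DirectSum.decompose 𝒜 (c ^ n) 0 : A) = c ^ n := by
    apply DirectSum.decompose_of_mem_same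
    rw [hA0]
    refine Submodule.mem_one.mpr ⟨(s : A₀) ^ n, ?_⟩
    rw [map_pow, ← hc]
  set v : A₀ := q + (s : A₀) ^ n with hv_def
  have hv : (DirectSum.decompose 𝒜 u 0 : A) = algebraMap A₀ A v := by
    rw [show u = (u - c ^ n) + c ^ n by ring, DirectSum.decompose_add, DirectSum.add_apply,
      Submodule.coe_add, hcn, ← hq, hv_def, map_add, Algebra.linearMap_apply, map_pow, ← hc]
  have hv𝔭 : v ∈ 𝔭.primeCompl := by
    intro hcon
    have h1 : (s : A₀) ^ n ∈ 𝔭 := by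
      have h2 := 𝔭.sub_mem hcon hq𝔭
      simpa [hv_def] using h2
    exact (pow_mem s.2 n) h1
  have hkillhom : ∀ (j : ℤ) (x : M), x ∈ ℳ j → v • x = 0 := by
    intro j x hx
    have h1 : v • x = (DirectSum.decompose 𝒜 u 0 : A) • x := by
      rw [hv, algebraMap_smul]
    rw [h1, kl_deg_zero hAM u j x hx, hu x]
    simp
  have hkill : ∀ x : M, v • x = 0 := by
    intro x
    rw [← DirectSum.sum_support_decompose ℳ x, Finset.smul_sum]
    apply Finset.sum_eq_zero
    intro j hj
    exact hkillhom j _ (DirectSum.decompose ℳ x j).2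
  refine subsingleton_of_forall_eq 0 ?_
  intro z
  induction z using LocalizedModule.induction_on with
  | h y t =>
    rw [lm_mk_eq_zero]
    exact ⟨⟨v, hv𝔭⟩, hkill y⟩

end GradedNakayama

open RingTheory.Sequence

end Aux

set_option maxHeartbeats 1000000 in
theorem stmt8
    (A₀ A M : Type*) [CommRing A₀] [CommRing A] [Algebra A₀ A]
    [IsNoetherianRing A₀] [IsNoetherianRing A]
    [AddCommGroup M] [Module A₀ M] [Module A M] [IsScalarTower A₀ A M]
    [Module.Finite A M]
    (𝒜 : ℕ → Submodule A₀ A) (ℳ : ℤ → Submodule A₀ M)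
    (hinj : Function.Injective (algebraMap A₀ A))
    (hA : DirectSum.IsInternal 𝒜) (hA0 : 𝒜 0 = 1)
    (hAmul : ∀ i j : ℕ, 𝒜 i * 𝒜 j ≤ 𝒜 (i + j))
    (hM : DirectSum.IsInternal ℳ)
    (hAM : ∀ (i : ℕ) (j : ℤ), ∀ a ∈ 𝒜 i, ∀ m ∈ ℳ j, a • m ∈ ℳ (i + j))
    (𝔭 : Ideal A₀) [𝔭.IsPrime] :
    𝔭 ∈ associatedPrimes A₀ M ↔
      moduleDepth (Localization.AtPrime 𝔭) (LocalizedModule 𝔭.primeCompl M) = 0 := by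
  classical
  constructor
  · intro hass
    obtain ⟨hp, x, hx⟩ := mem_ass_iff'.mp hass
    have hxkill : ∀ p ∈ 𝔭, p • x = 0 := fun p hp' =>
      (Submodule.mem_annihilator_span_singleton x p).mp (hx ▸ hp')
    have hne : (LocalizedModule.mk x (1 : 𝔭.primeCompl) :
        LocalizedModule 𝔭.primeCompl M) ≠ 0 := by
      intro hzero
      obtain ⟨t, ht⟩ := (lm_mk_eq_zero x (1 : 𝔭.primeCompl)).mp hzero
      exact t.2 (hx ▸ (Submodule.mem_annihilator_span_singleton x (t : A₀)).mpr ht)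
    have hns : ¬ Subsingleton (LocalizedModule 𝔭.primeCompl M) := fun hs =>
      hne (Subsingleton.elim _ _)
    rw [moduleDepth, if_neg hns]
    refine le_antisymm (sSup_le ?_) (zero_le)
    rintro n ⟨rs, hlen, hmem, hreg⟩
    cases rs with
    | nil => rw [← hlen]; simp
    | cons r l =>
      exfalso
      have hr := hmem r List.mem_cons_self
      have hsreg : IsSMulRegular _ r :=
        ((RingTheory.Sequence.isRegular_cons_iff _ _ _).mp hreg).1
      have h0 := maxIdeal_smul_mk_eq_zero 𝔭 x hxkill r hr
      apply hne
      apply hsreg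
      show r • LocalizedModule.mk x 1 = r • 0
      rw [h0, smul_zero]
  · intro hdepth
    have hns : ¬ Subsingleton (LocalizedModule 𝔭.primeCompl M) := by
      intro hs
      rw [moduleDepth, if_pos hs] at hdepth
      exact (by simp : (⊤ : ℕ∞) ≠ 0) hdepth
    rw [moduleDepth, if_neg hns] at hdepth
    have hP1 : IsLocalRing.maximalIdeal (Localization.AtPrime 𝔭) •
        (⊤ : Submodule (Localization.AtPrime 𝔭) (LocalizedModule 𝔭.primeCompl M)) ≠ ⊤ :=
      fun hcon => hns (graded_nakayama hA hA0 hM hAM 𝔭 hcon)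
    -- the torsion submodule
    set T : Submodule A M :=
      { carrier := {x | ∃ t : 𝔭.primeCompl, (t : A₀) • x = 0}
        add_mem' := by
          rintro x y ⟨t₁, ht₁⟩ ⟨t₂, ht₂⟩
          refine ⟨t₁ * t₂, ?_⟩
          have e1 : ((t₁ : A₀) * (t₂ : A₀)) • x = (t₂ : A₀) • ((t₁ : A₀) • x) := by
            rw [mul_comm, mul_smul]
          have e2 : ((t₁ : A₀) * (t₂ : A₀)) • y = (t₁ : A₀) • ((t₂ : A₀) • y) := mul_smul _ _ _
          push_cast
          rw [smul_add, e1, e2, ht₁, ht₂, smul_zero, smul_zero, add_zero]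
        zero_mem' := ⟨1, smul_zero _⟩
        smul_mem' := by
          intro a x ⟨t, ht⟩
          refine ⟨t, ?_⟩
          rw [← algebraMap_smul A (t : A₀) (a • x), smul_comm, algebraMap_smul, ht, smul_zero] }
      with hT
    have hmemT : ∀ x : M, x ∈ T ↔ ∃ t : 𝔭.primeCompl, (t : A₀) • x = 0 := fun x => Iff.rfl
    haveI : Module.Finite A (M ⧸ T) := Module.Finite.quotient A T
    -- mk y t = 0 in localized module iff y ∈ T
    have hmk0 : ∀ (y : M) (t : 𝔭.primeCompl),
        (LocalizedModule.mk y t : LocalizedModule 𝔭.primeCompl M) = 0 ↔ y ∈ T := by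
      intro y t
      rw [lm_mk_eq_zero, hmemT]
    -- each p ∈ 𝔭 lies in the contraction of an associated prime of M⧸T
    have hC2 : ∀ p ∈ 𝔭, ∃ Q ∈ associatedPrimes A (M ⧸ T), p ∈ Q.comap (algebraMap A₀ A) := by
      intro p hp
      have hpm : algebraMap A₀ (Localization.AtPrime 𝔭) p ∈
          IsLocalRing.maximalIdeal (Localization.AtPrime 𝔭) := by
        rw [← Localization.AtPrime.map_eq_maximalIdeal]
        exact Ideal.mem_map_of_mem _ hp
      have hnreg : ¬ IsSMulRegular (LocalizedModule 𝔭.primeCompl M)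
          (algebraMap A₀ (Localization.AtPrime 𝔭) p) := by
        intro hreg
        have hIsReg : RingTheory.Sequence.IsRegular (LocalizedModule 𝔭.primeCompl M)
            [algebraMap A₀ (Localization.AtPrime 𝔭) p] := by
          refine ⟨(RingTheory.Sequence.isWeaklyRegular_singleton_iff _ _).mpr hreg, ?_⟩
          intro hcon
          apply hP1
          rw [Ideal.ofList_singleton] at hcon
          exact le_antisymm le_top (le_trans (le_of_eq hcon)
            (Submodule.smul_mono_left ((Ideal.span_le).mpr (by simpa using hpm))))
        have h1 : (1 : ℕ∞) ∈ {n : ℕ∞ | ∃ rs : List (Localization.AtPrime 𝔭),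
            (rs.length : ℕ∞) = n ∧
            (∀ x ∈ rs, x ∈ IsLocalRing.maximalIdeal (Localization.AtPrime 𝔭)) ∧
            RingTheory.Sequence.IsRegular (LocalizedModule 𝔭.primeCompl M) rs} :=
          ⟨[algebraMap A₀ (Localization.AtPrime 𝔭) p], by simp, by simpa using hpm, hIsReg⟩
        have h2 := le_sSup h1
        rw [hdepth] at h2
        simp at h2
      have hz : ∃ z : LocalizedModule 𝔭.primeCompl M,
          algebraMap A₀ (Localization.AtPrime 𝔭) p • z = 0 ∧ z ≠ 0 := by
        by_contra hcon
        push_neg at hcon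
        apply hnreg
        intro z₁ z₂ hzz
        have hzz' : algebraMap A₀ (Localization.AtPrime 𝔭) p • z₁ =
            algebraMap A₀ (Localization.AtPrime 𝔭) p • z₂ := hzz
        have h3 : algebraMap A₀ (Localization.AtPrime 𝔭) p • (z₁ - z₂) = 0 := by
          rw [smul_sub, hzz', sub_self]
        have h4 := hcon _ h3
        rwa [sub_eq_zero] at h4
      obtain ⟨z, hz0, hzne⟩ := hz
      revert hz0 hzne
      induction z using LocalizedModule.induction_on with
      | h y t =>
        intro hz0 hzne
        rw [algebraMap_smul, LocalizedModule.smul'_mk, lm_mk_eq_zero] at hz0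
        obtain ⟨u, hu⟩ := hz0
        have hyT : (u : A₀) • y ∉ T := by
          intro hcon
          obtain ⟨t', ht'⟩ := (hmemT _).mp hcon
          apply hzne
          rw [hmk0]
          exact ⟨t' * u, by push_cast; rw [mul_smul]; exact ht'⟩
        have hpw : (algebraMap A₀ A p) • (Submodule.Quotient.mk ((u : A₀) • y) : M ⧸ T) = 0 := by
          rw [algebraMap_smul, ← Submodule.Quotient.mk_smul, Submodule.Quotient.mk_eq_zero]
          refine (hmemT _).mpr ⟨1, ?_⟩
          rw [OneMemClass.coe_one, one_smul, smul_comm, hu]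
        have hwne : (Submodule.Quotient.mk ((u : A₀) • y) : M ⧸ T) ≠ 0 := by
          rw [ne_eq, Submodule.Quotient.mk_eq_zero]
          exact hyT
        obtain ⟨Q, hQ, hle⟩ :=
          exists_le_isAssociatedPrime_of_isNoetherianRing A
            (Submodule.Quotient.mk ((u : A₀) • y) : M ⧸ T) hwne
        refine ⟨Q, hQ, ?_⟩
        rw [Ideal.mem_comap]
        apply hle
        rw [Submodule.mem_colon_singleton, Submodule.mem_bot]
        exact hpw
    -- contractions of associated primes lie in 𝔭
    have hcomap : ∀ Q ∈ associatedPrimes A (M ⧸ T), Q.comap (algebraMap A₀ A) ≤ 𝔭 := by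
      intro Q hQ a ha
      obtain ⟨hQp, ybar, hann⟩ := mem_ass_iff'.mp hQ
      obtain ⟨y, rfl⟩ := Submodule.Quotient.mk_surjective T ybar
      by_contra hnot
      rw [Ideal.mem_comap, hann, Submodule.mem_annihilator_span_singleton] at ha
      rw [algebraMap_smul, ← Submodule.Quotient.mk_smul, Submodule.Quotient.mk_eq_zero] at ha
      obtain ⟨t, ht⟩ := (hmemT _).mp ha
      have hy : y ∈ T := by
        refine (hmemT _).mpr ⟨⟨(t : A₀) * a, mul_mem t.2 hnot⟩, ?_⟩
        show ((t : A₀) * a) • y = 0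
        rw [mul_smul]
        exact ht
      apply hQp.ne_top
      rw [hann, show (Submodule.Quotient.mk y : M ⧸ T) = 0 from
        (Submodule.Quotient.mk_eq_zero T).mpr hy]
      rw [show (A ∙ (0 : M ⧸ T)) = ⊥ by simp, Submodule.annihilator_bot]
    -- prime avoidance
    have hfin : (associatedPrimes A (M ⧸ T)).Finite := assFinite
    set 𝒬 : Finset (Ideal A₀) :=
      hfin.toFinset.image (fun Q => Q.comap (algebraMap A₀ A)) with h𝒬
    have hsubset : (𝔭 : Set A₀) ⊆ ⋃ J ∈ 𝒬, ((J : Ideal A₀) : Set A₀) := by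
      intro p hp
      obtain ⟨Q, hQ, hpQ⟩ := hC2 p hp
      have hmem𝒬 : Q.comap (algebraMap A₀ A) ∈ 𝒬 := by
        rw [h𝒬]
        exact Finset.mem_image.mpr ⟨Q, hfin.mem_toFinset.mpr hQ, rfl⟩
      exact Set.mem_biUnion hmem𝒬 hpQ
    have hprime : ∀ J ∈ 𝒬, J ≠ ⊥ → J ≠ ⊥ → (J : Ideal A₀).IsPrime := by
      intro J hJ _ _
      rw [h𝒬, Finset.mem_image] at hJ
      obtain ⟨Q, hQ, rfl⟩ := hJ
      have hQass := hfin.mem_toFinset.mp hQ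
      exact hQass.isPrime.comap _
    have havoid := (Ideal.subset_union_prime (⊥ : Ideal A₀) ⊥ hprime).mp hsubset
    obtain ⟨J, hJ𝒬, hle⟩ := havoid
    rw [h𝒬, Finset.mem_image] at hJ𝒬
    obtain ⟨Q₀, hQ₀mem, rfl⟩ := hJ𝒬
    have hQ₀ : Q₀ ∈ associatedPrimes A (M ⧸ T) := hfin.mem_toFinset.mp hQ₀mem
    have heq : Q₀.comap (algebraMap A₀ A) = 𝔭 := le_antisymm (hcomap Q₀ hQ₀) hle
    obtain ⟨hQ₀p, ybar, hann⟩ := mem_ass_iff'.mp hQ₀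
    obtain ⟨y, rfl⟩ := Submodule.Quotient.mk_surjective T ybar
    have h𝔭ann : ∀ a : A₀, a ∈ 𝔭 ↔ a • (Submodule.Quotient.mk y : M ⧸ T) = 0 := by
      intro a
      rw [← heq, Ideal.mem_comap, hann, Submodule.mem_annihilator_span_singleton,
        algebraMap_smul]
    obtain ⟨G, hG⟩ := IsNoetherian.noetherian 𝔭
    have hGy : ∀ a : A₀, a ∈ G → ∃ t : 𝔭.primeCompl, (t : A₀) • (a • y) = 0 := by
      intro a ha
      have ha𝔭 : a ∈ 𝔭 := by rw [← hG]; exact Ideal.subset_span ha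
      have h1 := (h𝔭ann a).mp ha𝔭
      rw [← Submodule.Quotient.mk_smul, Submodule.Quotient.mk_eq_zero] at h1
      exact (hmemT _).mp h1
    choose! t ht using hGy
    set sb : 𝔭.primeCompl := ∏ a ∈ G, t a with hsb
    refine mem_ass_iff'.mpr ⟨‹𝔭.IsPrime›, (sb : A₀) • y, ?_⟩
    ext a
    rw [Submodule.mem_annihilator_span_singleton]
    constructor
    · intro ha
      have hGle : Ideal.span (G : Set A₀) ≤
          (Submodule.span A₀ {(sb : A₀) • y}).annihilator := by
        rw [Ideal.span_le]
        intro b hb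
        rw [SetLike.mem_coe, Submodule.mem_annihilator_span_singleton]
        have hprod : (∏ c ∈ G.erase b, t c) * t b = ∏ c ∈ G, t c := Finset.prod_erase_mul G t hb
        rw [hsb, ← hprod]
        push_cast
        rw [mul_smul, smul_comm b, smul_comm b, ht b hb, smul_zero]
      have ha2 : a ∈ Ideal.span (G : Set A₀) := by rw [← hG] at ha; exact ha
      exact (Submodule.mem_annihilator_span_singleton _ _).mp (hGle ha2)
    · intro ha
      have h1 : (a * (sb : A₀)) • y = 0 := by rw [mul_smul]; exact ha
      have h2 : (a * (sb : A₀)) • (Submodule.Quotient.mk y : M ⧸ T) = 0 := by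
        rw [← Submodule.Quotient.mk_smul, h1, Submodule.Quotient.mk_zero]
      have h3 : a * (sb : A₀) ∈ 𝔭 := (h𝔭ann _).mpr h2
      rcases ‹𝔭.IsPrime›.mem_or_mem h3 with h4 | h4
      · exact h4
      · exact absurd h4 sb.2
end
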